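/- If the finite difference scheme with symbol γ(ξ) = Σ_{k=-r}^{p} a_k e^{ikξ} is Cauchy-stable (|γ(ξ)| ≤ 1 for all real ξ) and consistent of order at least one (Σ a_k = 1 and Σ k a_k = -λ with λ ≠ 0), then |a_0| < 1. -/

import Mathlib

open Complex Finset

set_option maxHeartbeats 1000000 in
/-- If the scheme with symbol `γ(ξ) = Σ_{k=-r}^{p} a_k e^{ikξ}` is Cauchy-stable and
consistent of order at least one, then `|a 0| < 1`. -/
theorem abs_a0_lt_one (r p : ℕ) (a : ℤ → ℂ) (lam : ℝ)
    (hstab : ∀ ξ : ℝ, ‖∑ k ∈ Finset.Icc (-(r:ℤ)) (p:ℤ),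
      a k * Complex.exp (Complex.I * k * ξ)‖ ≤ 1)
    (hcons1 : ∑ k ∈ Finset.Icc (-(r:ℤ)) (p:ℤ), a k = 1)
    (hcons2 : ∑ k ∈ Finset.Icc (-(r:ℤ)) (p:ℤ), (k : ℂ) * a k = -(lam : ℂ))
    (hlam : lam ≠ 0) :
    ‖a 0‖ < 1 := by
  by_contra hcon
  push_neg at hcon
  set T := Finset.Icc (-(r:ℤ)) (p:ℤ) with hT
  have h0T : (0:ℤ) ∈ T := by simp [hT]
  set g : ℝ → ℂ := fun ξ => ∑ k ∈ T, a k * Complex.exp (Complex.I * k * ξ) with hg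
  have hgcont : Continuous g := by
    apply continuous_finset_sum
    intro k _
    exact continuous_const.mul (Complex.continuous_exp.comp (by continuity))
  have pi_pos := Real.pi_pos
  -- character integrals over [0, 4π]
  have hchar : ∀ k ∈ T, (∫ ξ in (0:ℝ)..(4*Real.pi), Complex.exp (Complex.I * k * ξ))
      = if k = 0 then ((4*Real.pi : ℝ) : ℂ) else 0 := by
    intro k _
    by_cases hk : k = 0
    · simp [hk]
    · rw [if_neg hk]
      have hck : (Complex.I * (k:ℂ)) ≠ 0 := by
        simp [Complex.I_ne_zero, hk]
      rw [integral_exp_mul_complex hck]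
      have e1 : (Complex.I * (k:ℂ) * ((4*Real.pi : ℝ) : ℂ))
          = ((2*k : ℤ) : ℂ) * (2 * Real.pi * Complex.I) := by push_cast; ring
      have e2 : (Complex.I * (k:ℂ) * ((0:ℝ) : ℂ)) = 0 := by push_cast; ring
      rw [e1, e2, Complex.exp_int_mul_two_pi_mul_I, Complex.exp_zero]
      simp
  have hint_each : ∀ k ∈ T, IntervalIntegrable
      (fun ξ : ℝ => a k * Complex.exp (Complex.I * k * ξ))
      MeasureTheory.volume 0 (4*Real.pi) := by
    intro k _
    exact (continuous_const.mul
      (Complex.continuous_exp.comp (by continuity))).intervalIntegrable _ _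
  have hintg : (∫ ξ in (0:ℝ)..(4*Real.pi), g ξ) = ((4*Real.pi : ℝ) : ℂ) * a 0 := by
    rw [hg]
    rw [intervalIntegral.integral_finset_sum hint_each]
    have hterm : ∀ k ∈ T, (∫ ξ in (0:ℝ)..(4*Real.pi), a k * Complex.exp (Complex.I * k * ξ))
        = if k = 0 then a k * ((4*Real.pi : ℝ) : ℂ) else 0 := by
      intro k hk
      rw [intervalIntegral.integral_const_mul, hchar k hk]
      by_cases hk0 : k = 0 <;> simp [hk0]
    rw [Finset.sum_congr rfl hterm, Finset.sum_ite_eq' T 0 (fun k => a k * ((4*Real.pi : ℝ) : ℂ))]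
    simp [h0T, mul_comm]
  -- the nonnegative continuous function h
  set h : ℝ → ℝ := fun ξ => ‖a 0‖^2 - ((starRingEnd ℂ) (a 0) * g ξ).re with hh
  have hhcont : Continuous h :=
    continuous_const.sub (Complex.continuous_re.comp (continuous_const.mul hgcont))
  have hhnonneg : ∀ ξ, 0 ≤ h ξ := by
    intro ξ
    have h1 : ((starRingEnd ℂ) (a 0) * g ξ).re ≤ ‖(starRingEnd ℂ) (a 0) * g ξ‖ :=
      Complex.re_le_norm _
    have h2 : ‖(starRingEnd ℂ) (a 0) * g ξ‖ ≤ ‖a 0‖ * 1 := by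
      rw [norm_mul, Complex.norm_conj]
      exact mul_le_mul_of_nonneg_left (hstab ξ) (norm_nonneg _)
    have h3 : ‖a 0‖ * 1 ≤ ‖a 0‖^2 := by
      rw [mul_one, sq]
      nlinarith [norm_nonneg (a 0)]
    simp only [hh, sub_nonneg]
    linarith
  have hinth : (∫ ξ in (0:ℝ)..(4*Real.pi), h ξ) = 0 := by
    have hfcont : Continuous (fun ξ : ℝ => (starRingEnd ℂ) (a 0) * g ξ) :=
      continuous_const.mul hgcont
    have hfint : IntervalIntegrable (fun ξ : ℝ => (starRingEnd ℂ) (a 0) * g ξ)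
        MeasureTheory.volume 0 (4*Real.pi) := hfcont.intervalIntegrable _ _
    have hre := Complex.reCLM.intervalIntegral_comp_comm hfint
    simp only [Complex.reCLM_apply, Function.comp] at hre
    have hre' : (∫ ξ in (0:ℝ)..(4*Real.pi), ((starRingEnd ℂ) (a 0) * g ξ).re)
        = ((starRingEnd ℂ) (a 0) * ∫ ξ in (0:ℝ)..(4*Real.pi), g ξ).re := by
      rw [hre, intervalIntegral.integral_const_mul]
    rw [hh]
    simp only []
    have h2int : IntervalIntegrable (fun ξ : ℝ => ((starRingEnd ℂ) (a 0) * g ξ).re)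
        MeasureTheory.volume 0 (4*Real.pi) :=
      (Complex.continuous_re.comp hfcont).intervalIntegrable _ _
    rw [intervalIntegral.integral_sub
      ((continuous_const (y := ‖a 0‖^2)).intervalIntegrable _ _) h2int]
    rw [hre']
    rw [intervalIntegral.integral_const, hintg]
    have key : ((starRingEnd ℂ) (a 0) * (((4*Real.pi : ℝ) : ℂ) * a 0)).re
        = (4*Real.pi) * ‖a 0‖^2 := by
      rw [show (starRingEnd ℂ) (a 0) * (((4*Real.pi : ℝ) : ℂ) * a 0)
        = ((4*Real.pi : ℝ) : ℂ) * (a 0 * (starRingEnd ℂ) (a 0)) by ring,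
        Complex.mul_conj, Complex.sq_norm]
      norm_cast
    rw [key]
    simp only [smul_eq_mul, sub_zero]
    ring
  -- h vanishes on Ioc 0 (4π)
  have hzeroIoc : Set.EqOn h 0 (Set.Ioc 0 (4*Real.pi)) := by
    apply MeasureTheory.Measure.eqOn_Ioc_of_ae_eq MeasureTheory.volume
    · exact (intervalIntegral.integral_eq_zero_iff_of_le_of_nonneg_ae
        (by linarith : (0:ℝ) ≤ 4*Real.pi)
        (Filter.Eventually.of_forall hhnonneg)
        (hhcont.intervalIntegrable _ _)).mp hinth
    · exact hhcont.continuousOn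
    · exact continuous_const.continuousOn
  -- hence g equals a 0 on Ioc 0 (4π)
  have hgeq : ∀ ξ ∈ Set.Ioc (0:ℝ) (4*Real.pi), g ξ = a 0 := by
    intro ξ hξ
    have h0 : h ξ = 0 := hzeroIoc hξ
    have hre : ((starRingEnd ℂ) (a 0) * g ξ).re = ‖a 0‖^2 := by
      simp only [hh] at h0; linarith
    have hns : Complex.normSq (g ξ - a 0) ≤ 1 - ‖a 0‖^2 := by
      rw [Complex.normSq_sub]
      have h1 : Complex.normSq (g ξ) ≤ 1 := by
        rw [← Complex.sq_norm]
        nlinarith [hstab ξ, norm_nonneg (g ξ)]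
      have h2 : (g ξ * (starRingEnd ℂ) (a 0)).re = ‖a 0‖^2 := by
        rw [mul_comm]; exact hre
      rw [h2, ← Complex.sq_norm (a 0)]
      linarith
    have hz : Complex.normSq (g ξ - a 0) = 0 := by
      have := Complex.normSq_nonneg (g ξ - a 0)
      nlinarith
    exact sub_eq_zero.mp (Complex.normSq_eq_zero.mp hz)
  -- derivative of g at 2π
  have hterm : ∀ k : ℤ, HasDerivAt (fun ξ : ℝ => a k * Complex.exp (Complex.I * k * ξ))
      (a k * (Complex.exp (Complex.I * k * ((2*Real.pi : ℝ):ℂ)) * (Complex.I * k * ((1:ℝ):ℂ))))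
      (2*Real.pi) := by
    intro k
    have h1 : HasDerivAt (fun ξ : ℝ => ((ξ:ℂ))) ((1:ℝ):ℂ) (2*Real.pi) :=
      (hasDerivAt_id (2*Real.pi)).ofReal_comp
    exact ((HasDerivAt.const_mul (Complex.I * (k:ℂ)) h1).cexp).const_mul (a k)
  have hderiv : HasDerivAt (fun ξ : ℝ => ∑ k ∈ T, a k * Complex.exp (Complex.I * k * ξ))
      (∑ k ∈ T, a k * (Complex.exp (Complex.I * k * ((2*Real.pi : ℝ):ℂ))
        * (Complex.I * k * ((1:ℝ):ℂ)))) (2*Real.pi) :=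
    HasDerivAt.fun_sum (fun k _ => hterm k)
  have hval : (∑ k ∈ T, a k * (Complex.exp (Complex.I * k * ((2*Real.pi : ℝ):ℂ))
      * (Complex.I * k * ((1:ℝ):ℂ)))) = Complex.I * (-(lam:ℂ)) := by
    rw [← hcons2, Finset.mul_sum]
    apply Finset.sum_congr rfl
    intro k _
    have e : (Complex.I * (k:ℂ) * ((2*Real.pi : ℝ):ℂ)) = (k:ℂ) * (2*Real.pi*Complex.I) := by
      push_cast; ring
    rw [e]
    rw [show ((k:ℂ) * (2*(Real.pi:ℂ)*Complex.I)) = (((k:ℤ):ℂ) * (2*(Real.pi:ℂ)*Complex.I)) by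
      push_cast; ring]
    rw [Complex.exp_int_mul_two_pi_mul_I]
    push_cast; ring
  have hev : (fun ξ : ℝ => ∑ k ∈ T, a k * Complex.exp (Complex.I * k * ξ))
      =ᶠ[nhds (2*Real.pi)] fun _ => a 0 := by
    filter_upwards [Ioo_mem_nhds (by linarith : (0:ℝ) < 2*Real.pi)
      (by linarith : 2*Real.pi < 4*Real.pi)] with x hx
    exact hgeq x ⟨hx.1, le_of_lt hx.2⟩
  have h0d : HasDerivAt (fun ξ : ℝ => ∑ k ∈ T, a k * Complex.exp (Complex.I * k * ξ))
      0 (2*Real.pi) :=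
    (hasDerivAt_const (2*Real.pi) (a 0)).congr_of_eventuallyEq hev
  have hzero : Complex.I * (-(lam:ℂ)) = 0 := by
    rw [← hval]
    exact hderiv.unique h0d
  rcases mul_eq_zero.mp hzero with hI | hl
  · exact Complex.I_ne_zero hI
  · exact hlam (by exact_mod_cast neg_eq_zero.mp hl)
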